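/- arXiv:2108.06804 — 2 statements merged into one kernel-verified Lean document; each statement's English description precedes it below -/
import Mathlib

section
/- Let b ≥ 2 be an integer and let (u_s)_{s≥1} be a sequence of nonempty finite words over the digit alphabet {0,…,b−1} with lengths n_s = |u_s|. Suppose that D^{b-ary}_{n_s}(u_s) → 0 as s → ∞ and that n_s / (n_1 + ⋯ + n_{s−1}) → 0 as s → ∞. Then the real number x = Σ_{i≥1} c_i b^{−i}, where c_1 c_2 c_3 … is the infinite concatenation u_1 u_2 u_3 …, is simply normal to base b. -/
open MeasureTheory Filter

noncomputable section

/-- The Gauss measure of a set `A ⊆ [0,1]`:  `μ(A) = (1/log 2) ∫_A 1/(1+x) dx`. -/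
def gaussMeasure (A : Set ℝ) : ℝ := (1 / Real.log 2) * ∫ x in A, 1 / (1 + x)

/-- Value of the finite continued fraction `[0; a₁, …, aₙ]`. -/
def cfVal : List ℕ → ℝ
  | [] => 0
  | a :: rest => 1 / (a + cfVal rest)

/-- Increment the last entry of a list. -/
def bumpLast : List ℕ → List ℕ
  | [] => []
  | [a] => [a + 1]
  | a :: b :: rest => a :: bumpLast (b :: rest)

/-- The cf-cylinder `I_{[a₁,…,aₙ]}`: the open interval with endpoints
`[0;a₁,…,aₙ]` and `[0;a₁,…,aₙ+1]`. -/
def cfCylinder (l : List ℕ) : Set ℝ :=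
  Set.Ioo (min (cfVal l) (cfVal (bumpLast l))) (max (cfVal l) (cfVal (bumpLast l)))

/-- The Gauss map `T`. -/
def gaussMap (x : ℝ) : ℝ := if x = 0 then 0 else 1 / x - ⌊1 / x⌋

/-- The continued fraction digits of `x`: `cfDigits x n` is the digit `a_{n+1}`. -/
def cfDigits (x : ℝ) (n : ℕ) : ℕ := ⌊1 / (gaussMap^[n] x)⌋₊

/-- Number of occurrences of the word `v` starting at one of the first `n` positions
of the infinite sequence `a`. -/
def occCount (a : ℕ → ℕ) (v : List ℕ) (n : ℕ) : ℕ :=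
  ((Finset.range n).filter fun j => ∀ i < v.length, a (j + i) = v.getD i 0).card

/-- cf-discrepancy of the digit sequence `a` with respect to the word `v` at length `n`. -/
def cfDiscrSeq (a : ℕ → ℕ) (v : List ℕ) (n : ℕ) : ℝ :=
  |(occCount a v n : ℝ) / n - gaussMeasure (cfCylinder v)|

/-- cf-discrepancy `D^{cf}_{v,n}(x)` of a real number `x`. -/
def cfDiscr (v : List ℕ) (n : ℕ) (x : ℝ) : ℝ := cfDiscrSeq (cfDigits x) v n

/-- Number of occurrences of `v` in the finite word `w` starting within the first
`m` positions. -/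
def cfCountW (v w : List ℕ) (m : ℕ) : ℕ :=
  ((Finset.range m).filter fun j => v <+: w.drop j).card

/-- cf-discrepancy `D^{cf}_{v,m}(w)` of a finite word `w`. -/
def cfDiscrW (v w : List ℕ) (m : ℕ) : ℝ :=
  |(cfCountW v w m : ℝ) / m - gaussMeasure (cfCylinder v)|

/-- `x` is continued fraction normal: every word of positive integers occurs in the
continued fraction expansion of the fractional part of `x` with the asymptotic
frequency given by the Gauss measure of the corresponding cylinder. -/
def CFNormal (x : ℝ) : Prop :=
  ∀ v : List ℕ, v ≠ [] → (∀ d ∈ v, 0 < d) →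
    Tendsto (fun n => (occCount (cfDigits (Int.fract x)) v n : ℝ) / n) atTop
      (nhds (gaussMeasure (cfCylinder v)))

/-- `bDigit b x j` is the `(j+1)`-st digit of the base-`b` expansion of `x ∈ [0,1)`. -/
def bDigit (b : ℕ) (x : ℝ) (j : ℕ) : ℕ := (⌊x * (b : ℝ) ^ (j + 1)⌋).toNat % b

/-- `x` is simply normal to base `b`. -/
def SimplyNormal (b : ℕ) (x : ℝ) : Prop :=
  ∀ v < b, Tendsto
    (fun n => (((Finset.range n).filter fun j => bDigit b (Int.fract x) j = v).card : ℝ) / n)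
    atTop (nhds (1 / b))

/-- Simple discrepancy `D^{b-ary}_n(x)` of the first `n` base-`b` digits of `x`. -/
def bDiscr (b : ℕ) (n : ℕ) (x : ℝ) : ℝ :=
  ⨆ v : Fin b, |(((Finset.range n).filter fun j => bDigit b x j = v.1).card : ℝ) / n - 1 / b|

/-- Simple discrepancy `D^{b-ary}_m(w)` of a finite word `w` over `{0,…,b-1}`. -/
def bDiscrW (b : ℕ) (w : List ℕ) (m : ℕ) : ℝ :=
  ⨆ v : Fin b, |((w.take m).count v.1 : ℝ) / m - 1 / b|

/-- Lévy's constant `L = π²/(12 log 2)`. -/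
def levy : ℝ := Real.pi ^ 2 / (12 * Real.log 2)

end


lemma SN15.geomsum (b : ℕ) (hb : 2 ≤ b) : ∑' k : ℕ, ((b:ℝ)^(k+1))⁻¹ = ((b:ℝ) - 1)⁻¹ := by
  have hb1 : (1:ℝ) < b := by exact_mod_cast hb.trans_lt' one_lt_two
  have h0 : (0:ℝ) < b := by linarith
  have hr : ‖(b:ℝ)⁻¹‖ < 1 := by
    rw [Real.norm_eq_abs, abs_of_pos (by positivity)]
    rw [inv_lt_one_iff₀]; right; exact hb1
  have hgeo := tsum_geometric_of_norm_lt_one (ξ := (b:ℝ)⁻¹) hr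
  calc ∑' k:ℕ, ((b:ℝ)^(k+1))⁻¹ = ∑' k:ℕ, (b:ℝ)⁻¹ * ((b:ℝ)⁻¹)^k := by
        simp [pow_succ', inv_pow, mul_comm]
  _ = (b:ℝ)⁻¹ * ∑' k:ℕ, ((b:ℝ)⁻¹)^k := tsum_mul_left
  _ = ((b:ℝ) - 1)⁻¹ := by rw [hgeo]; rw [inv_eq_one_div, inv_eq_one_div]; field_simp

lemma SN15.geomsummable (b : ℕ) (hb : 2 ≤ b) : Summable (fun k : ℕ => ((b:ℝ)^(k+1))⁻¹) := by
  have hb1 : (1:ℝ) < b := by exact_mod_cast hb.trans_lt' one_lt_two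
  have hr : ‖(b:ℝ)⁻¹‖ < 1 := by
    rw [Real.norm_eq_abs, abs_of_pos (by positivity)]
    rw [inv_lt_one_iff₀]; right; exact hb1
  have := summable_geometric_of_norm_lt_one hr
  have h2 := this.mul_left (b:ℝ)⁻¹
  refine h2.congr fun k => ?_
  simp [pow_succ', inv_pow, mul_comm]

lemma SN15.digitsummable (b : ℕ) (hb : 2 ≤ b) (d : ℕ → ℕ) (hd : ∀ k, d k < b) :
    Summable (fun k : ℕ => (d k:ℝ) * ((b:ℝ)^(k+1))⁻¹) := by
  refine Summable.of_nonneg_of_le (fun k => by positivity) (fun k => ?_)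
    ((SN15.geomsummable b hb).mul_left ((b:ℝ) - 1))
  have : (d k : ℝ) ≤ (b:ℝ) - 1 := by
    have := hd k; have : (d k : ℕ) ≤ b - 1 := by omega
    have hcast : ((d k : ℕ) : ℝ) ≤ ((b-1 : ℕ) : ℝ) := by exact_mod_cast this
    rw [Nat.cast_sub (by omega)] at hcast; simpa using hcast
  have hp : (0:ℝ) ≤ ((b:ℝ)^(k+1))⁻¹ := by positivity
  exact mul_le_mul_of_nonneg_right this hp

lemma SN15.tail_lt_one (b : ℕ) (hb : 2 ≤ b) (d : ℕ → ℕ) (hd : ∀ k, d k < b)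
    (hk : ∃ k0, d k0 ≠ b - 1) : ∑' k : ℕ, (d k:ℝ) * ((b:ℝ)^(k+1))⁻¹ < 1 := by
  obtain ⟨k0, hk0⟩ := hk
  have hb0 : (0:ℝ) < b := by positivity
  set h' : ℕ → ℝ := fun k => ((b:ℝ)-1) * ((b:ℝ)^(k+1))⁻¹
    - (if k = k0 then ((b:ℝ)^(k0+1))⁻¹ else 0) with hh'
  have hgs := SN15.geomsummable b hb
  have hsum1 : Summable (fun k => ((b:ℝ)-1) * ((b:ℝ)^(k+1))⁻¹) := hgs.mul_left _
  have hsum2 : Summable (fun k : ℕ => (if k = k0 then ((b:ℝ)^(k0+1))⁻¹ else 0)) := by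
    apply summable_of_ne_finset_zero (s := {k0}); intro k hk
    simp at hk; simp [hk]
  have hsumh' : Summable h' := hsum1.sub hsum2
  have hle : ∀ k, (d k:ℝ) * ((b:ℝ)^(k+1))⁻¹ ≤ h' k := by
    intro k
    by_cases h : k = k0
    · subst h
      have h1 : d k + 2 ≤ b := by have := hd k; omega
      have h2 : (d k : ℝ) ≤ (b:ℝ) - 2 := by
        have : ((d k : ℕ) : ℝ) + 2 ≤ (b:ℝ) := by exact_mod_cast h1
        linarith
      have hp : (0:ℝ) < ((b:ℝ)^(k+1))⁻¹ := by positivity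
      have hval : h' k = ((b:ℝ)-2) * ((b:ℝ)^(k+1))⁻¹ := by
        simp only [hh', eq_self_iff_true, if_true]; ring
      rw [hval]
      exact mul_le_mul_of_nonneg_right h2 hp.le
    · have h2 : (d k : ℝ) ≤ (b:ℝ) - 1 := by
        have h1 : d k + 1 ≤ b := hd k
        have : ((d k : ℕ) : ℝ) + 1 ≤ (b:ℝ) := by exact_mod_cast h1
        linarith
      simp only [hh', if_neg h, sub_zero]
      have hp : (0:ℝ) ≤ ((b:ℝ)^(k+1))⁻¹ := by positivity
      exact mul_le_mul_of_nonneg_right h2 hp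
  have h1 : ∑' k, (d k:ℝ) * ((b:ℝ)^(k+1))⁻¹ ≤ ∑' k, h' k :=
    Summable.tsum_le_tsum hle (SN15.digitsummable b hb d hd) hsumh'
  have h2 : ∑' k, h' k = 1 - ((b:ℝ)^(k0+1))⁻¹ := by
    rw [Summable.tsum_sub hsum1 hsum2, tsum_mul_left, SN15.geomsum b hb, tsum_ite_eq]
    have hb1 : (1:ℝ) < b := by exact_mod_cast hb.trans_lt' one_lt_two
    rw [mul_inv_cancel₀ (by linarith)]
  have h3 : (0:ℝ) < ((b:ℝ)^(k0+1))⁻¹ := by positivity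
  linarith







lemma SN15.tail_nonneg (b : ℕ) (d : ℕ → ℕ) :
    0 ≤ ∑' k : ℕ, (d k:ℝ) * ((b:ℝ)^(k+1))⁻¹ :=
  tsum_nonneg fun k => by positivity

lemma SN15.floor_eq (b : ℕ) (hb : 2 ≤ b) (d : ℕ → ℕ) (hd : ∀ k, d k < b)
    (hfreq : ∀ j, ∃ k, d (j + k) ≠ b - 1) (j : ℕ) :
    ⌊(∑' k : ℕ, (d k:ℝ) * ((b:ℝ)^(k+1))⁻¹) * (b:ℝ)^(j+1)⌋
      = ((∑ i ∈ Finset.range (j+1), d i * b^(j-i) : ℕ) : ℤ) := by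
  have hb0 : (0:ℝ) < b := by positivity
  set x := ∑' k : ℕ, (d k:ℝ) * ((b:ℝ)^(k+1))⁻¹ with hx
  set M : ℕ := ∑ i ∈ Finset.range (j+1), d i * b^(j-i) with hM
  set r : ℝ := ∑' k : ℕ, (d (j+1+k):ℝ) * ((b:ℝ)^(k+1))⁻¹ with hr
  have hsum : Summable (fun k : ℕ => (d k:ℝ) * ((b:ℝ)^(k+1))⁻¹) :=
    SN15.digitsummable b hb d hd
  have hsum2 : Summable (fun k : ℕ => (d k:ℝ) * ((b:ℝ)^(k+1))⁻¹ * (b:ℝ)^(j+1)) :=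
    hsum.mul_right _
  have hsplit : x * (b:ℝ)^(j+1) = (M:ℝ) + r := by
    rw [hx, ← tsum_mul_right]
    rw [← Summable.sum_add_tsum_nat_add (j+1) hsum2]
    congr 1
    · rw [hM]; push_cast
      refine Finset.sum_congr rfl fun i hi => ?_
      have hij : i ≤ j := by simpa [Nat.lt_succ_iff] using hi
      have hpow : (b:ℝ)^(j+1) = (b:ℝ)^(i+1) * (b:ℝ)^(j-i) := by
        rw [show j+1 = (i+1)+(j-i) by omega, pow_add]
      rw [hpow]
      have hne : ((b:ℝ)^(i+1)) ≠ 0 := by positivity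
      field_simp
      try ring
    · rw [hr]
      refine tsum_congr fun k => ?_
      have hidx : k + (j+1) = j+1+k := by omega
      rw [hidx]
      have hpow : (b:ℝ)^(j+1+k+1) = (b:ℝ)^(j+1) * (b:ℝ)^(k+1) := by
        rw [show j+1+k+1 = (j+1)+(k+1) by omega, pow_add]
      rw [hpow, mul_inv]
      have hne : ((b:ℝ)^(j+1)) ≠ 0 := by positivity
      field_simp
      try ring
  have hr0 : 0 ≤ r := SN15.tail_nonneg b _
  have hr1 : r < 1 := SN15.tail_lt_one b hb _ (fun k => hd _) (hfreq (j+1))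
  rw [Int.floor_eq_iff]
  constructor
  · rw [hsplit]; push_cast; linarith
  · rw [hsplit]; push_cast; linarith

lemma SN15.digit_eq (b : ℕ) (hb : 2 ≤ b) (d : ℕ → ℕ) (hd : ∀ k, d k < b)
    (hfreq : ∀ j, ∃ k, d (j + k) ≠ b - 1) (j : ℕ) :
    bDigit b (∑' k : ℕ, (d k:ℝ) * ((b:ℝ)^(k+1))⁻¹) j = d j := by
  rw [bDigit, SN15.floor_eq b hb d hd hfreq j, Int.toNat_natCast]
  rw [Finset.sum_range_succ, Nat.sub_self, pow_zero, mul_one]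
  have hdvd : b ∣ ∑ i ∈ Finset.range j, d i * b^(j-i) := by
    refine Finset.dvd_sum fun i hi => ?_
    have : i < j := Finset.mem_range.mp hi
    have : b^(j-i) = b * b^(j-i-1) := by
      rw [← pow_succ']; congr 1; omega
    rw [this]
    exact ⟨d i * b^(j-i-1), by ring⟩
  obtain ⟨q, hq⟩ := hdvd
  rw [hq, Nat.mul_add_mod]
  exact Nat.mod_eq_of_lt (hd j)

lemma SN15.mem_Ico (b : ℕ) (hb : 2 ≤ b) (d : ℕ → ℕ) (hd : ∀ k, d k < b)
    (hfreq : ∀ j, ∃ k, d (j + k) ≠ b - 1) :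
    (∑' k : ℕ, (d k:ℝ) * ((b:ℝ)^(k+1))⁻¹) ∈ Set.Ico (0:ℝ) 1 :=
  ⟨SN15.tail_nonneg b d, by simpa using SN15.tail_lt_one b hb d hd (by simpa using hfreq 0)⟩


lemma SN15.count_filter_eq (a : ℕ → ℕ) (l : List ℕ) (h : ∀ j < l.length, a j = l.getD j 0)
    (v : ℕ) : ∀ m, m ≤ l.length →
    ((Finset.range m).filter fun j => a j = v).card = (l.take m).count v := by
  intro m
  induction m with
  | zero => simp
  | succ m ih =>
    intro hm
    have hm' : m ≤ l.length := by omega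
    have hml : m < l.length := by omega
    rw [Finset.range_add_one, Finset.filter_insert]
    rw [List.take_succ]
    have hget : l[m]? = some l[m] := List.getElem?_eq_getElem hml
    rw [hget]
    simp only [Option.toList_some, List.count_append, List.count_singleton]
    have ham : a m = l[m] := by
      rw [h m hml, List.getD_eq_getElem l 0 hml]
    by_cases hcase : a m = v
    · rw [if_pos hcase, Finset.card_insert_of_notMem (by simp), ih hm']
      have : l[m] = v := by rw [← ham]; exact hcase
      simp [this]
    · rw [if_neg hcase, ih hm']
      have : ¬ (l[m] = v) := by rw [← ham]; exact hcase
      simp [this]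

lemma SN15.weighted_cesaro (w e : ℕ → ℝ) (hw : ∀ j, 1 ≤ w j) (he0 : ∀ j, 0 ≤ e j)
    (he : Tendsto e atTop (nhds 0)) :
    Tendsto (fun s => (∑ j ∈ Finset.range s, w j * e j) / (∑ j ∈ Finset.range s, w j))
      atTop (nhds 0) := by
  rw [Metric.tendsto_atTop]
  intro ε hε
  have hhalf : 0 < ε / 2 := by linarith
  obtain ⟨S0, hS0⟩ := (Metric.tendsto_atTop.mp he) (ε/2) hhalf
  set C : ℝ := ∑ j ∈ Finset.range S0, w j * e j with hC
  have hC0 : 0 ≤ C := Finset.sum_nonneg fun j _ => mul_nonneg ((hw j).trans' zero_le_one) (he0 j)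
  obtain ⟨S1, hS1⟩ := exists_nat_gt (2 * C / ε)
  refine ⟨max S0 S1 + 1, fun s hs => ?_⟩
  have hsS0 : S0 ≤ s := by omega
  have hsS1 : S1 ≤ s := by omega
  have hWlb : (s : ℝ) ≤ ∑ j ∈ Finset.range s, w j := by
    calc (s:ℝ) = ∑ j ∈ Finset.range s, (1:ℝ) := by simp
    _ ≤ _ := Finset.sum_le_sum fun j _ => hw j
  have hW0 : 0 < ∑ j ∈ Finset.range s, w j := by
    have : (1:ℝ) ≤ (s:ℝ) := by exact_mod_cast Nat.one_le_iff_ne_zero.mpr (by omega)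
    linarith
  have hCW : C < ε / 2 * ∑ j ∈ Finset.range s, w j := by
    have h1 : 2 * C / ε < (s:ℝ) := hS1.trans_le (by exact_mod_cast Nat.cast_le.mpr hsS1)
    have h2 : 2 * C / ε < ∑ j ∈ Finset.range s, w j := lt_of_lt_of_le h1 hWlb
    calc C = ε / 2 * (2 * C / ε) := by field_simp
    _ < _ := by exact mul_lt_mul_of_pos_left h2 hhalf
  have hsplit : ∑ j ∈ Finset.range s, w j * e j
      ≤ C + ε / 2 * ∑ j ∈ Finset.range s, w j := by
    rw [← Finset.sum_range_add_sum_Ico _ hsS0, ← hC]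
    have h1 : ∑ j ∈ Finset.Ico S0 s, w j * e j
        ≤ ∑ j ∈ Finset.Ico S0 s, w j * (ε/2) := by
      refine Finset.sum_le_sum fun j hj => ?_
      have hj' : S0 ≤ j := (Finset.mem_Ico.mp hj).1
      have := hS0 j hj'
      rw [Real.dist_eq, sub_zero] at this
      have hej : e j ≤ ε / 2 := le_of_lt (lt_of_abs_lt this)
      exact mul_le_mul_of_nonneg_left hej ((hw j).trans' zero_le_one)
    have h2 : ∑ j ∈ Finset.Ico S0 s, w j * (ε/2) ≤ ε / 2 * ∑ j ∈ Finset.range s, w j := by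
      rw [← Finset.sum_mul]
      rw [mul_comm]
      refine mul_le_mul_of_nonneg_left ?_ hhalf.le
      refine Finset.sum_le_sum_of_subset_of_nonneg ?_ fun j _ _ => (hw j).trans' zero_le_one
      rw [Finset.range_eq_Ico]
      exact Finset.Ico_subset_Ico (by omega) le_rfl
    linarith
  have hnum0 : 0 ≤ ∑ j ∈ Finset.range s, w j * e j :=
    Finset.sum_nonneg fun j _ => mul_nonneg ((hw j).trans' zero_le_one) (he0 j)
  rw [Real.dist_eq, sub_zero, abs_of_nonneg (div_nonneg hnum0 hW0.le)]
  rw [div_lt_iff₀ hW0]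
  calc ∑ j ∈ Finset.range s, w j * e j ≤ C + ε / 2 * ∑ j ∈ Finset.range s, w j := hsplit
  _ < ε / 2 * ∑ j ∈ Finset.range s, w j + ε / 2 * ∑ j ∈ Finset.range s, w j := by linarith
  _ = ε * ∑ j ∈ Finset.range s, w j := by ring


def SNflat (u : ℕ → List ℕ) (s : ℕ) : List ℕ := ((List.range s).map u).flatten
def SNN (u : ℕ → List ℕ) (s : ℕ) : ℕ := ∑ j ∈ Finset.range s, (u j).length
def SNcnt (c : ℕ → ℕ) (v m : ℕ) : ℕ := ((Finset.range m).filter fun j => c j = v).card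

lemma SNN_def (u : ℕ → List ℕ) (s : ℕ) : SNN u s = ∑ j ∈ Finset.range s, (u j).length := rfl
lemma SNcnt_def (c : ℕ → ℕ) (v m : ℕ) :
    SNcnt c v m = ((Finset.range m).filter fun j => c j = v).card := rfl

lemma SNflat_succ (u : ℕ → List ℕ) (s : ℕ) : SNflat u (s+1) = SNflat u s ++ u s := by
  simp [SNflat, List.range_succ]

lemma SNflat_len (u : ℕ → List ℕ) (s : ℕ) : (SNflat u s).length = SNN u s := by
  induction s with
  | zero => simp [SNflat, SNN]
  | succ s ih =>
    rw [SNflat_succ]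
    simp [ih, SNN_def, Finset.sum_range_succ]

lemma SNN_succ (u : ℕ → List ℕ) (s : ℕ) : SNN u (s+1) = SNN u s + (u s).length :=
  Finset.sum_range_succ _ _

lemma SNN_le (u : ℕ → List ℕ) (hlen : ∀ j, 1 ≤ (u j).length) (s : ℕ) : s ≤ SNN u s := by
  calc s = ∑ j ∈ Finset.range s, 1 := by simp
  _ ≤ SNN u s := Finset.sum_le_sum fun j _ => hlen j

lemma SNN_mono (u : ℕ → List ℕ) : Monotone (SNN u) := fun s t hst =>
  Finset.sum_le_sum_of_subset (Finset.range_subset_range.mpr hst)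

lemma SNflat_count (u : ℕ → List ℕ) (v s : ℕ) :
    (SNflat u s).count v = ∑ j ∈ Finset.range s, (u j).count v := by
  induction s with
  | zero => simp [SNflat]
  | succ s ih => rw [SNflat_succ, List.count_append, ih, Finset.sum_range_succ]

lemma SNcnt_mono (c : ℕ → ℕ) (v : ℕ) {m m' : ℕ} (h : m ≤ m') : SNcnt c v m ≤ SNcnt c v m' :=
  Finset.card_le_card (Finset.filter_subset_filter _ (Finset.range_subset_range.mpr h))

lemma SNcnt_le (c : ℕ → ℕ) (v : ℕ) {m m' : ℕ} (h : m ≤ m') :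
    SNcnt c v m' ≤ SNcnt c v m + (m' - m) := by
  rw [SNcnt_def, SNcnt_def]
  have hun : Finset.range m' = Finset.range m ∪ Finset.Ico m m' := by
    rw [Finset.range_eq_Ico, Finset.range_eq_Ico, Finset.Ico_union_Ico_eq_Ico (Nat.zero_le m) h]
  rw [hun, Finset.filter_union]
  refine (Finset.card_union_le _ _).trans ?_
  have h2 : ((Finset.Ico m m').filter fun j => c j = v).card ≤ m' - m := by
    refine (Finset.card_filter_le _ _).trans ?_
    rw [Nat.card_Ico]
  omega

/-- concatenating base-`b` words whose simple discrepancies tend to `0`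
and whose lengths are asymptotically negligible with respect to the sum of the previous
lengths yields a number simply normal to base `b`. -/
theorem simply_normal_of_concat_words (b : ℕ) (hb : 2 ≤ b) (u : ℕ → List ℕ)
    (hne : ∀ s, u s ≠ []) (hdig : ∀ s, ∀ d ∈ u s, d < b)
    (hdisc : Tendsto (fun s => bDiscrW b (u s) (u s).length) atTop (nhds 0))
    (hratio : Tendsto
      (fun s => ((u s).length : ℝ) / (∑ j ∈ Finset.range s, ((u j).length : ℝ)))
      atTop (nhds 0))
    (c : ℕ → ℕ)
    (hc : ∀ s : ℕ, ∀ i < (((List.range s).map u).flatten).length,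
      c i = (((List.range s).map u).flatten).getD i 0) :
    SimplyNormal b (∑' i : ℕ, (c i : ℝ) * ((b : ℝ) ^ (i + 1))⁻¹) := by
  have hb0 : 0 < b := by omega
  have hlen : ∀ j, 1 ≤ (u j).length := fun j => List.length_pos_iff.mpr (hne j)
  have hcF : ∀ s, ∀ i, i < SNN u s → c i = (SNflat u s).getD i 0 := by
    intro s i hi
    exact hc s i (lt_of_lt_of_eq hi (SNflat_len u s).symm)
  have hcb : ∀ i, c i < b := by
    intro i
    have hi : i < SNN u (i+1) := lt_of_lt_of_le (Nat.lt_succ_self i) (SNN_le u hlen (i+1))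
    have hmem : c i ∈ SNflat u (i+1) := by
      rw [hcF (i+1) i hi]
      rw [List.getD_eq_getElem _ 0 (by rw [SNflat_len]; exact hi)]
      exact List.getElem_mem _
    obtain ⟨l, hl, hmem2⟩ := List.mem_flatten.mp hmem
    obtain ⟨j, hj, rfl⟩ := List.mem_map.mp hl
    exact hdig j _ hmem2
  have hFinb : Nonempty (Fin b) := ⟨⟨0, hb0⟩⟩
  have hble : ∀ s, ∀ w, w < b → |((u s).count w : ℝ)/((u s).length : ℝ) - 1/b|
      ≤ bDiscrW b (u s) (u s).length := by
    intro s w hw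
    have h := le_ciSup (f := fun v : Fin b =>
      |((((u s).take (u s).length).count v.1 : ℕ) : ℝ)/((u s).length : ℝ) - 1/b|)
      (Finite.bddAbove_range _) (⟨w, hw⟩ : Fin b)
    simpa [bDiscrW, List.take_length] using h
  have he0 : ∀ s, 0 ≤ bDiscrW b (u s) (u s).length :=
    fun s => (abs_nonneg _).trans (hble s 0 hb0)
  have hblock : ∀ s, ∀ w, w < b → |((u s).count w : ℝ) - ((u s).length : ℝ)/b|
      ≤ ((u s).length : ℝ) * bDiscrW b (u s) (u s).length := by
    intro s w hw
    have hns : (0:ℝ) < ((u s).length : ℝ) := by exact_mod_cast hlen s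
    have heq : |((u s).count w : ℝ) - ((u s).length:ℝ)/b|
        = ((u s).length:ℝ) * |((u s).count w : ℝ)/((u s).length : ℝ) - 1/b| := by
      rw [← abs_of_pos hns, ← abs_mul]
      congr 1
      field_simp
      simp only [abs_of_pos hns]
      ring
    rw [heq]
    exact mul_le_mul_of_nonneg_left (hble s w hw) hns.le
  have hcntN : ∀ w s, SNcnt c w (SNN u s) = ∑ j ∈ Finset.range s, (u j).count w := by
    intro w s
    have h1 : SNcnt c w (SNN u s) = ((SNflat u s).take (SNN u s)).count w :=
      SN15.count_filter_eq c _ (fun j hj => hcF s j (by rwa [SNflat_len] at hj)) w _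
        (le_of_eq (SNflat_len u s).symm)
    rw [h1, ← SNflat_len u s, List.take_length, SNflat_count]
  have hpref : ∀ w, w < b → ∀ s, |(SNcnt c w (SNN u s) : ℝ) - (SNN u s : ℝ)/b|
      ≤ ∑ j ∈ Finset.range s, ((u j).length:ℝ) * bDiscrW b (u j) (u j).length := by
    intro w hw s
    rw [hcntN w s]
    have h1 : ((∑ j ∈ Finset.range s, (u j).count w : ℕ) : ℝ) - (SNN u s:ℝ)/b
        = ∑ j ∈ Finset.range s, (((u j).count w : ℝ) - ((u j).length:ℝ)/b) := by
      rw [Finset.sum_sub_distrib, SNN_def]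
      push_cast
      rw [Finset.sum_div]
    rw [h1]
    exact (Finset.abs_sum_le_sum_abs _ _).trans (Finset.sum_le_sum fun j _ => hblock j w hw)
  have hex : ∀ m : ℕ, ∃ s, m < SNN u (s+1) :=
    fun m => ⟨m, lt_of_lt_of_le (Nat.lt_succ_self m) (SNN_le u hlen (m+1))⟩
  have hs2 : ∀ m, m < SNN u (Nat.find (hex m) + 1) := fun m => Nat.find_spec (hex m)
  have hs1 : ∀ m, SNN u (Nat.find (hex m)) ≤ m := by
    intro m
    by_contra hcon
    push_neg at hcon
    rcases Nat.eq_zero_or_pos (Nat.find (hex m)) with h0 | h0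
    · rw [h0] at hcon
      simp [SNN_def] at hcon
    · have hmin := Nat.find_min (hex m)
        (show Nat.find (hex m) - 1 < Nat.find (hex m) by omega)
      apply hmin
      rw [show Nat.find (hex m) - 1 + 1 = Nat.find (hex m) by omega]
      exact hcon
  have hstend : Tendsto (fun m => Nat.find (hex m)) atTop atTop := by
    rw [tendsto_atTop_atTop]
    intro S
    refine ⟨SNN u S, fun m hm => ?_⟩
    by_contra hcon
    push_neg at hcon
    have h1 : SNN u (Nat.find (hex m) + 1) ≤ SNN u S := SNN_mono u (by omega)
    have h2 := hs2 m
    omega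
  have hBtend : Tendsto (fun s =>
      (∑ j ∈ Finset.range s, ((u j).length:ℝ) * bDiscrW b (u j) (u j).length)
        / (∑ j ∈ Finset.range s, ((u j).length:ℝ))
      + 2 * (((u s).length:ℝ) / (∑ j ∈ Finset.range s, ((u j).length:ℝ)))) atTop (nhds 0) := by
    have h1 := SN15.weighted_cesaro (fun j => ((u j).length:ℝ))
      (fun j => bDiscrW b (u j) (u j).length)
      (fun j => by show (1:ℝ) ≤ ((u j).length:ℝ); exact_mod_cast hlen j) he0 hdisc
    have h2 := hratio.const_mul (2:ℝ)
    have h3 := h1.add h2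
    simpa using h3
  have hNNcast : ∀ s, ((SNN u s : ℕ):ℝ) = ∑ j ∈ Finset.range s, ((u j).length:ℝ) := by
    intro s
    rw [SNN_def]
    push_cast
    ring
  have hmain : ∀ w, w < b → ∀ m, SNN u 1 ≤ m →
      |(SNcnt c w m : ℝ)/m - 1/b| ≤
      (∑ j ∈ Finset.range (Nat.find (hex m)), ((u j).length:ℝ) * bDiscrW b (u j) (u j).length)
        / (∑ j ∈ Finset.range (Nat.find (hex m)), ((u j).length:ℝ))
      + 2 * (((u (Nat.find (hex m))).length:ℝ)
        / (∑ j ∈ Finset.range (Nat.find (hex m)), ((u j).length:ℝ))) := by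
    intro w hw m hm
    set s := Nat.find (hex m) with hsdef
    have h1 : SNN u s ≤ m := hs1 m
    have h2 : m < SNN u (s+1) := hs2 m
    have h2' : m < SNN u s + (u s).length := by rwa [SNN_succ] at h2
    have hspos : 1 ≤ s := by
      rcases Nat.eq_zero_or_pos s with h0 | h0
      · rw [h0] at h2
        have : SNN u (0+1) = SNN u 1 := rfl
        omega
      · exact h0
    have hNpos : 1 ≤ SNN u s := le_trans hspos (SNN_le u hlen s)
    have hmpos : 1 ≤ m := le_trans hNpos h1
    have hNr : (0:ℝ) < (SNN u s : ℝ) := by exact_mod_cast hNpos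
    have hmr : (0:ℝ) < (m:ℝ) := by exact_mod_cast hmpos
    have hbr : (1:ℝ) ≤ (b:ℝ) := by exact_mod_cast hb0
    have hnsr : (0:ℝ) ≤ ((u s).length : ℝ) := by positivity
    have hc1 : SNcnt c w (SNN u s) ≤ SNcnt c w m := SNcnt_mono c w h1
    have hc2 : SNcnt c w m ≤ SNcnt c w (SNN u s) + (m - SNN u s) := SNcnt_le c w h1
    have hc3 : SNcnt c w m ≤ SNcnt c w (SNN u s) + (u s).length := by omega
    have hcast1 : ((SNcnt c w (SNN u s) : ℕ):ℝ) ≤ ((SNcnt c w m : ℕ):ℝ) := by exact_mod_cast hc1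
    have hcast2 : ((SNcnt c w m : ℕ):ℝ) ≤ SNcnt c w (SNN u s) + ((u s).length:ℝ) := by
      exact_mod_cast hc3
    have hcast0 : ((SNN u s : ℕ):ℝ) ≤ (m:ℝ) := by exact_mod_cast h1
    have hcast3 : (m:ℝ) ≤ SNN u s + ((u s).length:ℝ) := by exact_mod_cast h2'.le
    have hA1 : |(SNcnt c w m : ℝ) - (SNcnt c w (SNN u s) : ℝ)| ≤ ((u s).length : ℝ) := by
      rw [abs_le]
      constructor <;> linarith
    have hA2 := hpref w hw s
    have hA3 : |(SNN u s:ℝ)/b - (m:ℝ)/b| ≤ ((u s).length:ℝ) := by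
      rw [abs_sub_comm, ← sub_div, abs_of_nonneg (div_nonneg (by linarith) (by linarith))]
      refine le_trans (div_le_self (by linarith) hbr) (by linarith)
    have htri : |(SNcnt c w m:ℝ) - (m:ℝ)/b|
        ≤ (∑ j ∈ Finset.range s, ((u j).length:ℝ) * bDiscrW b (u j) (u j).length)
          + 2 * ((u s).length:ℝ) := by
      have t1 := abs_sub_le ((SNcnt c w m:ℝ)) ((SNcnt c w (SNN u s):ℝ)) ((m:ℝ)/b)
      have t2 := abs_sub_le ((SNcnt c w (SNN u s):ℝ)) ((SNN u s:ℝ)/b) ((m:ℝ)/b)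
      linarith
    have heq : |(SNcnt c w m:ℝ)/m - 1/b| = |(SNcnt c w m:ℝ) - (m:ℝ)/b| / m := by
      have heq2 : (SNcnt c w m:ℝ)/m - 1/b = ((SNcnt c w m:ℝ) - (m:ℝ)/b)/m := by
        rw [sub_div]
        congr 1
        rw [div_div, mul_comm, ← div_div, div_self hmr.ne']
      rw [heq2, abs_div, abs_of_pos hmr]
    rw [heq, ← hNNcast s]
    have hnum0 : 0 ≤ |(SNcnt c w m:ℝ) - (m:ℝ)/b| := abs_nonneg _
    have hrhs0 : 0 ≤ (∑ j ∈ Finset.range s, ((u j).length:ℝ) * bDiscrW b (u j) (u j).length)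
        + 2 * ((u s).length:ℝ) := le_trans hnum0 htri
    calc |(SNcnt c w m:ℝ) - (m:ℝ)/b| / m
        ≤ ((∑ j ∈ Finset.range s, ((u j).length:ℝ) * bDiscrW b (u j) (u j).length)
          + 2 * ((u s).length:ℝ)) / m := by gcongr
      _ ≤ ((∑ j ∈ Finset.range s, ((u j).length:ℝ) * bDiscrW b (u j) (u j).length)
          + 2 * ((u s).length:ℝ)) / ((SNN u s : ℕ):ℝ) := by gcongr
      _ = (∑ j ∈ Finset.range s, ((u j).length:ℝ) * bDiscrW b (u j) (u j).length)
            / ((SNN u s : ℕ):ℝ)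
          + 2 * (((u s).length:ℝ) / ((SNN u s : ℕ):ℝ)) := by
          rw [add_div, mul_div_assoc]
  have hfreq : ∀ j, ∃ k, c (j + k) ≠ b - 1 := by
    intro j
    have hev : ∀ᶠ s in atTop, bDiscrW b (u s) (u s).length < 1/2 :=
      hdisc.eventually_lt_const (by norm_num : (0:ℝ) < 1/2)
    obtain ⟨s, hsj, hslt⟩ := ((eventually_ge_atTop (j+1)).and hev).exists
    have hltc : (u s).count (b-1) < (u s).length := by
      rcases lt_or_ge ((u s).count (b-1)) ((u s).length) with h | h
      · exact h
      · exfalso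
        have heqc : (u s).count (b-1) = (u s).length :=
          le_antisymm List.count_le_length h
        have hble2 := hble s (b-1) (by omega)
        rw [heqc] at hble2
        have hns : (0:ℝ) < ((u s).length:ℝ) := by exact_mod_cast hlen s
        rw [div_self hns.ne'] at hble2
        have hbr : (2:ℝ) ≤ (b:ℝ) := by exact_mod_cast hb
        have hhalf : 1/(b:ℝ) ≤ 1/2 := one_div_le_one_div_of_le (by norm_num) hbr
        have habs : |1 - 1/(b:ℝ)| = 1 - 1/b := abs_of_nonneg (by linarith)
        rw [habs] at hble2
        linarith
    have hexd : ∃ dd ∈ u s, dd ≠ b - 1 := by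
      by_contra hcon
      push_neg at hcon
      have : (u s).count (b-1) = (u s).length :=
        List.count_eq_length.mpr fun d hd => (hcon d hd).symm
      omega
    obtain ⟨dd, hdm, hdne⟩ := hexd
    obtain ⟨i, hi, hgi⟩ := List.getElem_of_mem hdm
    have hlt2 : SNN u s + i < SNN u (s+1) := by rw [SNN_succ]; omega
    have hcp : c (SNN u s + i) = dd := by
      rw [hcF (s+1) _ hlt2, SNflat_succ u s,
        List.getD_append_right _ _ _ _ (by rw [SNflat_len]; omega)]
      rw [SNflat_len, Nat.add_sub_cancel_left]
      rw [List.getD_eq_getElem _ 0 hi]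
      exact hgi
    refine ⟨SNN u s + i - j, ?_⟩
    have hj2 : j ≤ SNN u s := le_trans (by omega : j ≤ s) (SNN_le u hlen s)
    rw [show j + (SNN u s + i - j) = SNN u s + i by omega, hcp]
    exact hdne
  have hx01 := SN15.mem_Ico b hb c hcb hfreq
  have hfract : Int.fract (∑' i : ℕ, (c i : ℝ) * ((b : ℝ) ^ (i + 1))⁻¹)
      = ∑' i : ℕ, (c i : ℝ) * ((b : ℝ) ^ (i + 1))⁻¹ :=
    Int.fract_eq_self.mpr ⟨hx01.1, hx01.2⟩
  intro v hv
  have hdigits : ∀ j, bDigit b (Int.fract (∑' i : ℕ, (c i : ℝ) * ((b : ℝ) ^ (i + 1))⁻¹)) j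
      = c j := by
    intro j
    rw [hfract]
    exact SN15.digit_eq b hb c hcb hfreq j
  have habs : Tendsto (fun m => |(SNcnt c v m:ℝ)/m - 1/b|) atTop (nhds 0) := by
    apply squeeze_zero' (Eventually.of_forall fun m => abs_nonneg _) ?_ (hBtend.comp hstend)
    filter_upwards [eventually_ge_atTop (SNN u 1)] with m hm
    exact hmain v hv m hm
  have hcv : Tendsto (fun m => (SNcnt c v m:ℝ)/m) atTop (nhds (1/b)) := by
    rw [tendsto_iff_dist_tendsto_zero]
    simpa [Real.dist_eq] using habs
  refine hcv.congr fun m => ?_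
  congr 2
  rw [SNcnt_def]
  congr 1
  refine Finset.filter_congr fun j _ => ?_
  simp [hdigits j]
end

section
/- Let (u_s)_{s≥1} be a sequence of nonempty finite words of positive integers with lengths n_s = |u_s| such that n_s / (n_1 + ⋯ + n_{s−1}) → 0 as s → ∞, and such that for every k ≥ 1, every word v of k positive integers and every ε > 0 there is s_0 with D^{cf}_{v,n_s}(u_s) < ε − (k−1)/n_s for all s ≥ s_0. Then the irrational x ∈ (0,1) whose continued fraction digit sequence a_1, a_2, … is the infinite concatenation u_1 u_2 u_3 … is continued fraction normal. -/
open MeasureTheory Filter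

private lemma flatten_len_aux (u : ℕ → List ℕ) (s : ℕ) :
    (((List.range s).map u).flatten).length = ∑ j ∈ Finset.range s, (u j).length := by
  induction s with
  | zero => simp
  | succ b ih =>
    rw [List.range_succ, List.map_append, List.flatten_append, List.length_append, ih,
      Finset.sum_range_succ]
    simp

private lemma prefix_iff_forall_getD (v w : List ℕ) (r : ℕ) (h : r + v.length ≤ w.length) :
    v <+: w.drop r ↔ ∀ i < v.length, w.getD (r + i) 0 = v.getD i 0 := by
  constructor
  · intro hp i hi
    have h1 : v[i] = (w.drop r)[i]'(by rw [List.length_drop]; omega) := hp.getElem hi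
    rw [List.getElem_drop] at h1
    rw [List.getD_eq_getElem _ _ (show r + i < w.length by omega),
      List.getD_eq_getElem _ _ hi]
    exact h1.symm
  · intro hg
    have hv : v = List.take v.length (w.drop r) := by
      apply List.ext_getElem
      · rw [List.length_take, List.length_drop]; omega
      · intro i h1 h2
        have h3 := hg i h1
        rw [List.getD_eq_getElem _ _ (show r + i < w.length by omega),
          List.getD_eq_getElem _ _ h1] at h3
        rw [List.getElem_take, List.getElem_drop]
        exact h3.symm
    nth_rewrite 1 [hv]
    exact List.take_prefix _ _

set_option maxHeartbeats 2000000 in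
/-- concatenating words of positive integers whose cf-discrepancies are
eventually small (in the sense below) and whose lengths are asymptotically negligible
with respect to the sum of the previous lengths yields a continued fraction normal
number. -/
theorem cf_normal_of_concat_words (u : ℕ → List ℕ)
    (hne : ∀ s, u s ≠ []) (hpos : ∀ s, ∀ d ∈ u s, 0 < d)
    (hratio : Tendsto
      (fun s => ((u s).length : ℝ) / (∑ j ∈ Finset.range s, ((u j).length : ℝ)))
      atTop (nhds 0))
    (hdisc : ∀ v : List ℕ, v ≠ [] → (∀ d ∈ v, 0 < d) → ∀ ε : ℝ, 0 < ε →
      ∃ s₀ : ℕ, ∀ s ≥ s₀, cfDiscrW v (u s) (u s).length <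
        ε - ((v.length : ℝ) - 1) / (u s).length)
    (c : ℕ → ℕ)
    (hc : ∀ s : ℕ, ∀ i < (((List.range s).map u).flatten).length,
      c i = (((List.range s).map u).flatten).getD i 0)
    (x : ℝ) (hx : x ∈ Set.Ioo (0 : ℝ) 1) (hirr : Irrational x)
    (hxdig : ∀ n, cfDigits x n = c n) :
    CFNormal x := by
  intro v hv hvpos
  have hfr : Int.fract x = x := Int.fract_eq_self.mpr ⟨le_of_lt hx.1, hx.2⟩
  have hdigc : cfDigits x = c := funext hxdig
  rw [hfr, hdigc]
  set k := v.length with hk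
  have hkpos : 0 < k := List.length_pos_iff.mpr hv
  set μ := gaussMeasure (cfCylinder v) with hμ
  set nn : ℕ → ℕ := fun j => (u j).length with hnn
  set Nn : ℕ → ℕ := fun s => ∑ j ∈ Finset.range s, nn j with hNndef
  have hnn1 : ∀ j, 1 ≤ nn j := fun j => List.length_pos_iff.mpr (hne j)
  have hNmono : Monotone Nn := fun a b hab =>
    Finset.sum_le_sum_of_subset (Finset.range_subset_range.mpr hab)
  have hNge : ∀ s, s ≤ Nn s := by
    intro s
    calc s = ∑ _j ∈ Finset.range s, 1 := by simp
    _ ≤ Nn s := Finset.sum_le_sum fun j _ => hnn1 j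
  have hNsucc : ∀ s, Nn (s+1) = Nn s + nn s := fun s => Finset.sum_range_succ _ _
  -- digits of c within block b
  have hdig : ∀ b r, r < nn b → c (Nn b + r) = (u b).getD r 0 := by
    intro b r hr
    have hflen : ∀ s, (((List.range s).map u).flatten).length = Nn s := fun s =>
      flatten_len_aux u s
    have hlt : Nn b + r < (((List.range (b+1)).map u).flatten).length := by
      rw [hflen, hNsucc]; omega
    rw [hc (b+1) _ hlt]
    have hsp : ((List.range (b+1)).map u).flatten = ((List.range b).map u).flatten ++ u b := by
      rw [List.range_succ, List.map_append, List.flatten_append]; simp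
    have hlb : (((List.range b).map u).flatten).length = Nn b := hflen b
    rw [hsp, List.getD_eq_getElem _ _ (by
      rw [List.length_append, hlb]
      have hr' : r < (u b).length := hr
      omega)]
    rw [List.getElem_append_right (by omega : (((List.range b).map u).flatten).length ≤ Nn b + r)]
    have hidx : Nn b + r - (((List.range b).map u).flatten).length = r := by omega
    simp only [hidx]
    exact (List.getD_eq_getElem (u b) 0 hr).symm
  -- block occurrence counts
  have hocc_succ : ∀ s, occCount c v (Nn (s+1)) =
      occCount c v (Nn s) +
      ((Finset.range (nn s)).filter fun r => ∀ i < k, c (Nn s + r + i) = v.getD i 0).card := by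
    intro s
    rw [hNsucc s]
    show ((Finset.range (Nn s + nn s)).filter
        fun j => ∀ i < k, c (j + i) = v.getD i 0).card = _
    have hun : Finset.range (Nn s + nn s) =
        Finset.range (Nn s) ∪ Finset.Ico (Nn s) (Nn s + nn s) := by
      rw [Finset.range_eq_Ico, Finset.range_eq_Ico,
        Finset.Ico_union_Ico_eq_Ico (Nat.zero_le _) (Nat.le_add_right _ _)]
    rw [hun, Finset.filter_union, Finset.card_union_of_disjoint
      (Finset.disjoint_filter_filter (by
        rw [Finset.range_eq_Ico]; exact Finset.Ico_disjoint_Ico_consecutive 0 _ _))]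
    congr 1
    apply Finset.card_bij' (fun j _ => j - Nn s) (fun r _ => Nn s + r)
    · intro a ha
      simp only [Finset.mem_filter, Finset.mem_Ico] at ha
      simp only [Finset.mem_filter, Finset.mem_range]
      refine ⟨by omega, fun i hi => ?_⟩
      have : Nn s + (a - Nn s) + i = a + i := by omega
      rw [this]
      exact ha.2 i hi
    · intro r hr
      simp only [Finset.mem_filter, Finset.mem_range] at hr
      simp only [Finset.mem_filter, Finset.mem_Ico]
      exact ⟨⟨Nat.le_add_right _ _, by omega⟩, hr.2⟩
    · intro a ha
      simp only [Finset.mem_filter, Finset.mem_Ico] at ha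
      omega
    · intro r _
      omega
  have hkey : ∀ b r, r + k ≤ nn b →
      ((∀ i < k, c (Nn b + r + i) = v.getD i 0) ↔ v <+: (u b).drop r) := by
    intro b r hrk
    rw [prefix_iff_forall_getD v (u b) r hrk]
    apply forall_congr'
    intro i
    apply imp_congr_right
    intro hi
    have h1 : Nn b + r + i = Nn b + (r + i) := by omega
    rw [h1, hdig b (r + i) (by omega)]
  have hblock_lb : ∀ b, cfCountW v (u b) (nn b) ≤
      ((Finset.range (nn b)).filter fun r => ∀ i < k, c (Nn b + r + i) = v.getD i 0).card := by
    intro b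
    apply Finset.card_le_card
    intro r hr
    simp only [cfCountW, Finset.mem_filter, Finset.mem_range] at hr ⊢
    have hlen : k ≤ ((u b).drop r).length := hr.2.length_le
    rw [List.length_drop] at hlen
    have hrk : r + k ≤ nn b := by
      have h2 : (u b).length = nn b := rfl
      have h3 : r < nn b := hr.1
      omega
    exact ⟨hr.1, (hkey b r hrk).2 hr.2⟩
  have hblock_ub : ∀ b,
      ((Finset.range (nn b)).filter fun r => ∀ i < k, c (Nn b + r + i) = v.getD i 0).card ≤
      cfCountW v (u b) (nn b) + (k - 1) := by
    intro b
    have hsub : ((Finset.range (nn b)).filter fun r => ∀ i < k, c (Nn b + r + i) = v.getD i 0) ⊆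
        ((Finset.range (nn b)).filter fun r => v <+: (u b).drop r) ∪
        Finset.Ico (nn b + 1 - k) (nn b) := by
      intro r hr
      simp only [Finset.mem_filter, Finset.mem_range] at hr
      by_cases hrk : r + k ≤ nn b
      · exact Finset.mem_union_left _ (Finset.mem_filter.mpr
          ⟨Finset.mem_range.mpr hr.1, (hkey b r hrk).1 hr.2⟩)
      · exact Finset.mem_union_right _ (Finset.mem_Ico.mpr (by omega))
    calc _ ≤ (((Finset.range (nn b)).filter fun r => v <+: (u b).drop r) ∪
        Finset.Ico (nn b + 1 - k) (nn b)).card := Finset.card_le_card hsub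
    _ ≤ ((Finset.range (nn b)).filter fun r => v <+: (u b).drop r).card
        + (Finset.Ico (nn b + 1 - k) (nn b)).card := Finset.card_union_le _ _
    _ ≤ cfCountW v (u b) (nn b) + (k - 1) := by
        rw [Nat.card_Ico]
        apply Nat.add_le_add
        · exact le_of_eq rfl
        · have := hnn1 b
          omega
  -- monotonicity of occCount
  have hAmono : ∀ m n : ℕ, m ≤ n → occCount c v m ≤ occCount c v n ∧
      occCount c v n ≤ occCount c v m + (n - m) := by
    intro m n hmn
    constructor
    · apply Finset.card_le_card
      apply Finset.filter_subset_filter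
      exact Finset.range_subset_range.mpr hmn
    · have hsub : ((Finset.range n).filter fun j => ∀ i < k, c (j + i) = v.getD i 0) ⊆
          ((Finset.range m).filter fun j => ∀ i < k, c (j + i) = v.getD i 0) ∪ Finset.Ico m n := by
        intro j hj
        simp only [Finset.mem_filter, Finset.mem_range] at hj
        by_cases hjm : j < m
        · exact Finset.mem_union_left _ (Finset.mem_filter.mpr
            ⟨Finset.mem_range.mpr hjm, hj.2⟩)
        · exact Finset.mem_union_right _ (Finset.mem_Ico.mpr (by omega))
      have h1 : occCount c v n ≤
          ((Finset.range m).filter fun j => ∀ i < k, c (j + i) = v.getD i 0).card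
          + (Finset.Ico m n).card :=
        le_trans (Finset.card_le_card hsub) (Finset.card_union_le _ _)
      rw [Nat.card_Ico] at h1
      exact h1
  rw [Metric.tendsto_atTop]
  intro δ hδ
  have hε4 : (0:ℝ) < δ/4 := by linarith
  obtain ⟨s₀, hs₀⟩ := hdisc v hv hvpos (δ/4) hε4
  have hnbR : ∀ b, (0:ℝ) < (nn b : ℝ) := fun b => by exact_mod_cast hnn1 b
  -- per-block real estimate
  have hblockR : ∀ b, s₀ ≤ b →
      |((((Finset.range (nn b)).filter
          fun r => ∀ i < k, c (Nn b + r + i) = v.getD i 0).card : ℕ) : ℝ) - μ * nn b|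
        ≤ δ/4 * nn b := by
    intro b hb
    have hd := hs₀ b hb
    rw [cfDiscrW] at hd
    have hdd : |(cfCountW v (u b) (nn b) : ℝ) / (nn b) - μ| < δ/4 - ((k:ℝ)-1)/(nn b) := hd
    set C := cfCountW v (u b) (nn b) with hC
    set B := ((Finset.range (nn b)).filter
      fun r => ∀ i < k, c (Nn b + r + i) = v.getD i 0).card with hB
    have hn := hnbR b
    have h1 : (C:ℝ) ≤ B := by exact_mod_cast hblock_lb b
    have h2 : (B:ℝ) ≤ C + ((k:ℝ)-1) := by
      have h2a := hblock_ub b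
      have h2b : (B:ℝ) ≤ ((C + (k-1) : ℕ) : ℝ) := by exact_mod_cast h2a
      push_cast [Nat.cast_sub hkpos] at h2b
      linarith
    have h3 : |(C:ℝ)/(nn b) - μ| * nn b < (δ/4 - ((k:ℝ)-1)/nn b) * nn b :=
      mul_lt_mul_of_pos_right hdd hn
    have h4 : |(C:ℝ) - μ * nn b| = |(C:ℝ)/(nn b) - μ| * nn b := by
      have hq : (C:ℝ)/(nn b) - μ = ((C:ℝ) - μ * nn b)/(nn b) := by field_simp
      rw [hq, abs_div, abs_of_pos hn, div_mul_cancel₀ _ (ne_of_gt hn)]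
    have h5 : (δ/4 - ((k:ℝ)-1)/nn b) * nn b = δ/4 * nn b - ((k:ℝ)-1) := by
      rw [sub_mul, div_mul_cancel₀ _ (ne_of_gt hn)]
    have h6 : |(B:ℝ) - C| ≤ (k:ℝ)-1 := abs_le.mpr ⟨by linarith, by linarith⟩
    have h7 := abs_sub_le (B:ℝ) (C:ℝ) (μ * nn b)
    rw [h4] at h7
    linarith
  -- cumulative estimate
  have hcum : ∀ s, s₀ ≤ s → |(occCount c v (Nn s):ℝ) - μ * Nn s| ≤
      |(occCount c v (Nn s₀):ℝ) - μ * Nn s₀| + δ/4 * ((Nn s:ℝ) - Nn s₀) := by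
    intro s hs
    induction s, hs using Nat.le_induction with
    | base => simp
    | succ s hs ih =>
      have hA := hocc_succ s
      have hNc : ((Nn (s+1)):ℝ) = (Nn s : ℝ) + nn s := by rw [hNsucc]; push_cast; ring
      have hbk := hblockR s hs
      set B := ((Finset.range (nn s)).filter
        fun r => ∀ i < k, c (Nn s + r + i) = v.getD i 0).card with hB
      have hAc : (occCount c v (Nn (s+1)) : ℝ) = occCount c v (Nn s) + B := by
        exact_mod_cast hA
      have heq : (occCount c v (Nn (s+1)):ℝ) - μ * Nn (s+1) =
          ((occCount c v (Nn s):ℝ) - μ * Nn s) + ((B:ℝ) - μ * nn s) := by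
        rw [hAc, hNc]; ring
      rw [heq]
      have := abs_add_le ((occCount c v (Nn s):ℝ) - μ * Nn s) ((B:ℝ) - μ * nn s)
      rw [hNc]
      linarith
  -- limit facts
  have hNtend : Tendsto (fun s => ((Nn s : ℕ):ℝ)) atTop atTop :=
    tendsto_natCast_atTop_atTop.comp (tendsto_atTop_mono hNge tendsto_id)
  set K₀ := |(occCount c v (Nn s₀):ℝ) - μ * Nn s₀| with hK₀
  have hKt : Tendsto (fun s => K₀ / (Nn s : ℝ)) atTop (nhds 0) :=
    Tendsto.div_atTop tendsto_const_nhds hNtend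
  rw [Metric.tendsto_atTop] at hKt
  obtain ⟨s₃, hs₃⟩ := hKt (δ/4) hε4
  have hratio' : Tendsto (fun s => (nn s : ℝ) / (Nn s : ℝ)) atTop (nhds 0) := by
    have hfn : (fun s => (nn s : ℝ) / (Nn s : ℝ)) =
        fun s => ((u s).length : ℝ) / ∑ j ∈ Finset.range s, ((u j).length : ℝ) := by
      funext s
      congr 1
      show ((∑ j ∈ Finset.range s, nn j : ℕ) : ℝ) = _
      push_cast
      rfl
    rw [hfn]
    exact hratio
  rw [Metric.tendsto_atTop] at hratio'
  have h1μ : (0:ℝ) < 1 + |μ| := by positivity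
  obtain ⟨s₂, hs₂⟩ := hratio' (δ/(4*(1+|μ|))) (by positivity)
  set s₁ := max (max s₀ s₂) (max s₃ 1) with hs₁
  refine ⟨Nn s₁, fun n hn => ?_⟩
  set s := Nat.findGreatest (fun t => Nn t ≤ n) n with hsdef
  have hs₁n : s₁ ≤ n := le_trans (hNge s₁) hn
  have hsle : Nn s ≤ n := Nat.findGreatest_spec (P := fun t => Nn t ≤ n) hs₁n hn
  have hges : s₁ ≤ s := Nat.le_findGreatest (P := fun t => Nn t ≤ n) hs₁n hn
  have hlt : n < Nn (s+1) := by
    by_cases hc1 : s + 1 ≤ n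
    · by_contra hcon
      push_neg at hcon
      exact Nat.findGreatest_is_greatest (Nat.lt_succ_self s) hc1 hcon
    · have := hNge (s+1)
      omega
  have hss0 : s₀ ≤ s := by omega
  have hss2 : s₂ ≤ s := by omega
  have hss3 : s₃ ≤ s := by omega
  have hspos : 1 ≤ s := by omega
  have h01 : (0:ℝ) < (Nn s : ℝ) := by
    have := hNge s
    exact_mod_cast (by omega : 0 < Nn s)
  have hnpos : (0:ℝ) < (n:ℝ) := lt_of_lt_of_le h01 (by exact_mod_cast hsle)
  have hm := hAmono (Nn s) n hsle
  have hd1 : (occCount c v (Nn s) : ℝ) ≤ occCount c v n := by exact_mod_cast hm.1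
  have hd2 : (occCount c v n : ℝ) ≤ occCount c v (Nn s) + nn s := by
    have h3 : occCount c v n ≤ occCount c v (Nn s) + nn s := by
      have h4 := hm.2
      have h5 := hNsucc s
      omega
    exact_mod_cast h3
  have hcums := hcum s hss0
  have hNsnn : ((Nn s:ℕ):ℝ) ≤ n := by exact_mod_cast hsle
  have hnubR : (n:ℝ) ≤ (Nn s : ℝ) + nn s := by
    have h5 := hNsucc s
    exact_mod_cast (by omega : n ≤ Nn s + nn s)
  rw [Real.dist_eq]
  have hrw : (occCount c v n : ℝ)/n - μ = ((occCount c v n : ℝ) - μ * n)/n := by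
    field_simp
  rw [hrw, abs_div, abs_of_pos hnpos]
  have t1 : |(occCount c v n:ℝ) - occCount c v (Nn s)| ≤ nn s :=
    abs_le.mpr ⟨by linarith, by linarith⟩
  have t2 : |(occCount c v (Nn s):ℝ) - μ * Nn s| ≤ K₀ + δ/4 * Nn s := by
    refine le_trans hcums ?_
    have h6 : ((Nn s₀:ℕ):ℝ) ≥ 0 := Nat.cast_nonneg _
    have h7 := mul_le_mul_of_nonneg_left
      (by linarith : (Nn s:ℝ) - Nn s₀ ≤ Nn s) (le_of_lt hε4)
    linarith
  have t3 : |μ * (Nn s:ℝ) - μ * n| ≤ |μ| * nn s := by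
    rw [← mul_sub, abs_mul]
    refine mul_le_mul_of_nonneg_left ?_ (abs_nonneg μ)
    exact abs_le.mpr ⟨by linarith, by linarith⟩
  have hnum : |(occCount c v n : ℝ) - μ * n| ≤ (1+|μ|) * nn s + K₀ + δ/4 * Nn s := by
    have u1 := abs_sub_le ((occCount c v n : ℝ)) ((occCount c v (Nn s):ℝ)) (μ * n)
    have u2 := abs_sub_le ((occCount c v (Nn s):ℝ)) (μ * (Nn s:ℝ)) (μ * n)
    have u3 : (0:ℝ) ≤ nn s := le_of_lt (hnbR s)
    nlinarith [abs_nonneg μ]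
  have hfrac : |(occCount c v n : ℝ) - μ * n| / n ≤
      ((1+|μ|) * nn s + K₀ + δ/4 * Nn s) / (Nn s : ℝ) := by
    have hKnn : (0:ℝ) ≤ K₀ := abs_nonneg _
    have hnum0 : (0:ℝ) ≤ (1+|μ|) * nn s + K₀ + δ/4 * Nn s := by
      have w1 : (0:ℝ) ≤ (nn s : ℝ) := le_of_lt (hnbR s)
      have w2 : (0:ℝ) ≤ |μ| := abs_nonneg μ
      have w3 : (0:ℝ) ≤ δ/4 * Nn s := mul_nonneg (le_of_lt hε4) (le_of_lt h01)
      have w4 : (0:ℝ) ≤ (1+|μ|) * nn s := mul_nonneg (by linarith) w1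
      linarith
    exact div_le_div₀ hnum0 hnum h01 hNsnn
  have hsplit2 : ((1+|μ|) * nn s + K₀ + δ/4 * Nn s) / (Nn s : ℝ) =
      (1+|μ|) * ((nn s : ℝ)/Nn s) + K₀/(Nn s : ℝ) + δ/4 := by
    rw [add_div, add_div, mul_div_cancel_right₀ _ (ne_of_gt h01), mul_div_assoc]
  have b1 : (1+|μ|) * ((nn s:ℝ)/Nn s) < δ/4 := by
    have hb := hs₂ s hss2
    rw [Real.dist_eq, sub_zero] at hb
    have hb' : (nn s:ℝ)/Nn s < δ/(4*(1+|μ|)) := lt_of_abs_lt hb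
    calc (1+|μ|) * ((nn s:ℝ)/Nn s) < (1+|μ|) * (δ/(4*(1+|μ|))) :=
          mul_lt_mul_of_pos_left hb' h1μ
    _ = δ/4 := by
        rw [mul_comm 4 (1+|μ|), ← div_div, div_right_comm,
          mul_comm (1+|μ|) (δ/4/(1+|μ|)), div_mul_cancel₀ _ (ne_of_gt h1μ)]
  have b2 : K₀/(Nn s : ℝ) < δ/4 := by
    have hb := hs₃ s hss3
    rw [Real.dist_eq, sub_zero] at hb
    exact lt_of_le_of_lt (le_abs_self _) hb
  calc |(occCount c v n : ℝ) - μ * n| / n ≤ _ := hfrac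
  _ = (1+|μ|) * ((nn s : ℝ)/Nn s) + K₀/(Nn s : ℝ) + δ/4 := hsplit2
  _ < δ/4 + δ/4 + δ/4 := by linarith
  _ < δ := by linarith
end
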